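/- Perturbation bound along the gradient ray: let K ∈ S with Y ≻ 0 solving A_K Y A_Kᵀ + Σ = Y (Σ ≻ 0), let N = RK − Bᵀ X A_K, and for η ≥ 0 set K_η = K − 2η N Y. Suppose A_η := A − B K_η is Schur for all η in [0, η₀], where η₀ = (√(μ₁ + μ₂²) − μ₂)/(4μ₁) with μ₁ = ‖Y‖₂‖B N Y‖₂²/λ₁(Σ) and μ₂ = ‖Y‖₂‖B N Y‖₂‖A_K‖₂/λ₁(Σ). Then for every η ≤ η₀, the solution Y_η of A_η Y_η A_ηᵀ + Σ = Y_η satisfies ‖Y_η‖₂ ≤ β₀‖Y‖₂ with β₀ = 1/(1 − 4μ₁η₀² − 4μ₂η₀) > 0. -/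

import Mathlib

open Matrix
open scoped ENNReal

/-- Spectral radius of a real square matrix, computed over ℂ. -/
noncomputable def specRad {n : ℕ} (A : Matrix (Fin n) (Fin n) ℝ) : ℝ≥0∞ :=
  spectralRadius ℂ (A.map Complex.ofReal)

/-- A real square matrix is Schur stable if its spectral radius is `< 1`. -/
def IsSchur {n : ℕ} (A : Matrix (Fin n) (Fin n) ℝ) : Prop := specRad A < 1

/-- The spectral (ℓ²-operator) norm of a real matrix. -/
noncomputable def spec2 {p q : ℕ} (M : Matrix (Fin p) (Fin q) ℝ) : ℝ :=
  ‖LinearMap.toContinuousLinearMap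
    ((Matrix.toEuclideanLin M : EuclideanSpace ℝ (Fin q) →ₗ[ℝ] EuclideanSpace ℝ (Fin p)))‖

namespace S17

open Filter
open scoped Matrix.Norms.L2Operator

lemma spec2_eq_norm {p q : ℕ} (M : Matrix (Fin p) (Fin q) ℝ) : spec2 M = ‖M‖ := rfl

noncomputable def Ev {k : ℕ} (v : Fin k → ℝ) : EuclideanSpace ℝ (Fin k) :=
  (WithLp.equiv 2 (Fin k → ℝ)).symm v

lemma inner_Ev {k : ℕ} (u v : Fin k → ℝ) : inner ℝ (Ev u) (Ev v) = u ⬝ᵥ v := by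
  simp [Ev, PiLp.inner_apply, dotProduct, RCLike.inner_apply, mul_comm]

lemma norm_Ev_sq {k : ℕ} (v : Fin k → ℝ) : ‖Ev v‖ ^ 2 = v ⬝ᵥ v := by
  rw [Ev, EuclideanSpace.norm_eq, Real.sq_sqrt (by positivity)]
  simp [dotProduct, sq]

lemma norm_mulVec {p q : ℕ} (M : Matrix (Fin p) (Fin q) ℝ) (v : Fin q → ℝ) :
    ‖Ev (M *ᵥ v)‖ ≤ ‖M‖ * ‖Ev v‖ :=
  M.l2_opNorm_mulVec (Ev v)

lemma norm_le_of_mulVec {p q : ℕ} (M : Matrix (Fin p) (Fin q) ℝ) {C : ℝ} (hC : 0 ≤ C)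
    (h : ∀ v, ‖Ev (M *ᵥ v)‖ ≤ C * ‖Ev v‖) : ‖M‖ ≤ C := by
  rw [Matrix.l2_opNorm_def]
  refine ContinuousLinearMap.opNorm_le_bound _ hC (fun x => ?_)
  have := h ((WithLp.equiv 2 (Fin q → ℝ)) x)
  simpa [Ev, Matrix.toEuclideanLin_apply] using this

lemma dot_mulVec_le {p q : ℕ} (M : Matrix (Fin p) (Fin q) ℝ) (u : Fin p → ℝ) (v : Fin q → ℝ) :
    u ⬝ᵥ (M *ᵥ v) ≤ ‖M‖ * ‖Ev u‖ * ‖Ev v‖ := by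
  rw [← inner_Ev]
  calc inner ℝ (Ev u) (Ev (M *ᵥ v)) ≤ ‖Ev u‖ * ‖Ev (M *ᵥ v)‖ := real_inner_le_norm _ _
  _ ≤ ‖Ev u‖ * (‖M‖ * ‖Ev v‖) :=
      mul_le_mul_of_nonneg_left (norm_mulVec M v) (norm_nonneg _)
  _ = ‖M‖ * ‖Ev u‖ * ‖Ev v‖ := by ring

lemma norm_transpose {k : ℕ} (M : Matrix (Fin k) (Fin k) ℝ) : ‖Mᵀ‖ = ‖M‖ := by
  rw [← Matrix.conjTranspose_eq_transpose_of_trivial]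
  exact M.l2_opNorm_conjTranspose

lemma dot_symm {k : ℕ} (P : Matrix (Fin k) (Fin k) ℝ) (hP : Pᵀ = P) (u v : Fin k → ℝ) :
    u ⬝ᵥ (P *ᵥ v) = v ⬝ᵥ (P *ᵥ u) := by
  rw [Matrix.dotProduct_mulVec, ← Matrix.mulVec_transpose, hP, dotProduct_comm]

lemma cs_psd {k : ℕ} (P : Matrix (Fin k) (Fin k) ℝ) (hP : Pᵀ = P)
    (hpos : ∀ x, 0 ≤ x ⬝ᵥ (P *ᵥ x)) (u v : Fin k → ℝ) :
    (u ⬝ᵥ (P *ᵥ v)) ^ 2 ≤ (u ⬝ᵥ (P *ᵥ u)) * (v ⬝ᵥ (P *ᵥ v)) := by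
  have key : ∀ t : ℝ, 0 ≤ (v ⬝ᵥ (P *ᵥ v)) * (t * t) + (2 * (u ⬝ᵥ (P *ᵥ v))) * t
      + (u ⬝ᵥ (P *ᵥ u)) := by
    intro t
    have h := hpos (u + t • v)
    have expand : (u + t • v) ⬝ᵥ (P *ᵥ (u + t • v)) =
        (v ⬝ᵥ (P *ᵥ v)) * (t * t) + (2 * (u ⬝ᵥ (P *ᵥ v))) * t + (u ⬝ᵥ (P *ᵥ u)) := by
      rw [Matrix.mulVec_add, Matrix.mulVec_smul]
      simp only [add_dotProduct, dotProduct_add, smul_dotProduct,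
        dotProduct_smul, smul_eq_mul]
      rw [dot_symm P hP v u]
      ring
    linarith [expand ▸ h]
  have hd := discrim_le_zero key
  rw [discrim] at hd
  nlinarith [hd]

lemma norm_le_of_form {k : ℕ} (P : Matrix (Fin k) (Fin k) ℝ) (hP : Pᵀ = P)
    (hpos : ∀ x, 0 ≤ x ⬝ᵥ (P *ᵥ x)) {C : ℝ} (hC : 0 ≤ C)
    (h : ∀ x, x ⬝ᵥ (P *ᵥ x) ≤ C * ‖Ev x‖ ^ 2) : ‖P‖ ≤ C := by
  refine norm_le_of_mulVec P hC (fun x => ?_)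
  have h1 : ‖Ev (P *ᵥ x)‖ ^ 2 = x ⬝ᵥ (P *ᵥ (P *ᵥ x)) := by
    rw [norm_Ev_sq, dot_symm P hP]
  have h2 : (x ⬝ᵥ (P *ᵥ (P *ᵥ x))) ^ 2 ≤ (x ⬝ᵥ (P *ᵥ x)) * ((P *ᵥ x) ⬝ᵥ (P *ᵥ (P *ᵥ x))) :=
    cs_psd P hP hpos x (P *ᵥ x)
  have h3 : x ⬝ᵥ (P *ᵥ x) ≤ C * ‖Ev x‖ ^ 2 := h x
  have h4 : (P *ᵥ x) ⬝ᵥ (P *ᵥ (P *ᵥ x)) ≤ C * ‖Ev (P *ᵥ x)‖ ^ 2 := h (P *ᵥ x)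
  have hm : (x ⬝ᵥ (P *ᵥ x)) * ((P *ᵥ x) ⬝ᵥ (P *ᵥ (P *ᵥ x))) ≤
      (C * ‖Ev x‖ ^ 2) * (C * ‖Ev (P *ᵥ x)‖ ^ 2) :=
    mul_le_mul h3 h4 (hpos _) (by positivity)
  have h5 : (‖Ev (P *ᵥ x)‖ ^ 2) ^ 2 ≤ C ^ 2 * ‖Ev x‖ ^ 2 * ‖Ev (P *ᵥ x)‖ ^ 2 := by
    nlinarith [h2, hm, h1]
  rcases eq_or_lt_of_le (norm_nonneg (Ev (P *ᵥ x))) with h0 | h0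
  · rw [← h0]; positivity
  · have h6 : ‖Ev (P *ᵥ x)‖ ^ 2 ≤ C ^ 2 * ‖Ev x‖ ^ 2 := by
      have hp : 0 < ‖Ev (P *ᵥ x)‖ ^ 2 := by positivity
      nlinarith
    have := Real.sqrt_le_sqrt h6
    rw [Real.sqrt_sq (norm_nonneg _)] at this
    calc ‖Ev (P *ᵥ x)‖ ≤ Real.sqrt (C ^ 2 * ‖Ev x‖ ^ 2) := this
      _ = C * ‖Ev x‖ := by
          rw [Real.sqrt_mul (by positivity), Real.sqrt_sq hC, Real.sqrt_sq (norm_nonneg _)]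

lemma lam_min_bound {k : ℕ} (S : Matrix (Fin k) (Fin k) ℝ) (hS : S.PosDef) (x : Fin k → ℝ) :
    (⨅ i, hS.1.eigenvalues i) * (x ⬝ᵥ x) ≤ x ⬝ᵥ (S *ᵥ x) := by
  rcases Nat.eq_zero_or_pos k with rfl | hk
  · simp [dotProduct]
  haveI : Nonempty (Fin k) := ⟨⟨0, hk⟩⟩
  obtain ⟨U, hUdef, hUU, hspec⟩ : ∃ U : Matrix (Fin k) (Fin k) ℝ,
      U = (hS.1.eigenvectorUnitary : Matrix (Fin k) (Fin k) ℝ) ∧ U * Uᵀ = 1 ∧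
      S = U * Matrix.diagonal (hS.1.eigenvalues) * Uᵀ := by
    refine ⟨_, rfl, ?_, ?_⟩
    · have := (Matrix.mem_unitaryGroup_iff).mp (hS.1.eigenvectorUnitary).2
      rwa [← Matrix.conjTranspose_eq_transpose_of_trivial]
    · have := hS.1.spectral_theorem
      rw [RCLike.ofReal_real_eq_id] at this
      simpa [Matrix.star_eq_conjTranspose, Matrix.conjTranspose_eq_transpose_of_trivial] using this
  have key : ∀ u v : Fin k → ℝ, (Uᵀ *ᵥ u) ⬝ᵥ (Uᵀ *ᵥ v) = u ⬝ᵥ v := by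
    intro u v
    rw [Matrix.dotProduct_mulVec, Matrix.vecMul_transpose, Matrix.mulVec_mulVec, hUU,
      Matrix.one_mulVec]
  have hdot : ∀ z : Fin k → ℝ, x ⬝ᵥ (U *ᵥ z) = (Uᵀ *ᵥ x) ⬝ᵥ z := by
    intro z
    rw [Matrix.dotProduct_mulVec, Matrix.mulVec_transpose]
  have hq : x ⬝ᵥ (S *ᵥ x) = ∑ i, hS.1.eigenvalues i * ((Uᵀ *ᵥ x) i * (Uᵀ *ᵥ x) i) := by
    conv_lhs => rw [hspec]
    rw [← Matrix.mulVec_mulVec, ← Matrix.mulVec_mulVec, hdot]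
    simp only [dotProduct, Matrix.mulVec_diagonal]
    exact Finset.sum_congr rfl (fun i _ => by ring)
  have hxx : x ⬝ᵥ x = ∑ i, (Uᵀ *ᵥ x) i * (Uᵀ *ᵥ x) i := by
    rw [← key x x]; rfl
  rw [hq, hxx, Finset.mul_sum]
  refine Finset.sum_le_sum (fun i _ => ?_)
  have h1 : (⨅ j, hS.1.eigenvalues j) ≤ hS.1.eigenvalues i :=
    ciInf_le (Set.Finite.bddBelow (Set.finite_range _)) i
  nlinarith [mul_self_nonneg ((Uᵀ *ᵥ x) i)]

lemma real_norm_le_complex {k : ℕ} (M : Matrix (Fin k) (Fin k) ℝ) :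
    ‖M‖ ≤ ‖M.map Complex.ofReal‖ := by
  refine norm_le_of_mulVec M (norm_nonneg _) (fun v => ?_)
  have hmv : (M.map Complex.ofReal) *ᵥ (fun i => (v i : ℂ)) = fun i => ((M *ᵥ v) i : ℂ) := by
    funext i
    simp [Matrix.mulVec, Matrix.map, dotProduct]
  have hb : ‖(EuclideanSpace.equiv (Fin k) ℂ).symm ((M.map Complex.ofReal) *ᵥ (fun i => (v i : ℂ)))‖
      ≤ ‖M.map Complex.ofReal‖ * ‖(WithLp.equiv 2 (Fin k → ℂ)).symm (fun i => (v i : ℂ))‖ :=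
    (M.map Complex.ofReal).l2_opNorm_mulVec
      ((WithLp.equiv 2 (Fin k → ℂ)).symm (fun i => (v i : ℂ)))
  rw [hmv] at hb
  have hn1 : ‖(EuclideanSpace.equiv (Fin k) ℂ).symm (fun i => ((M *ᵥ v) i : ℂ))‖
      = ‖Ev (M *ᵥ v)‖ := by
    rw [Ev, EuclideanSpace.norm_eq, EuclideanSpace.norm_eq]; simp
  have hn2 : ‖(WithLp.equiv 2 (Fin k → ℂ)).symm (fun i => (v i : ℂ))‖ = ‖Ev v‖ := by
    rw [Ev, EuclideanSpace.norm_eq, EuclideanSpace.norm_eq]; simp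
  rw [hn1, hn2] at hb
  exact hb

lemma pow_norm_tendsto {k : ℕ} (A : Matrix (Fin k) (Fin k) ℝ) (hA : IsSchur A) :
    Tendsto (fun j : ℕ => ‖A ^ j‖) atTop (nhds 0) := by
  set Ac : Matrix (Fin k) (Fin k) ℂ := A.map Complex.ofReal with hAc
  have hmap : ∀ j : ℕ, (A ^ j).map Complex.ofReal = Ac ^ j := by
    intro j
    have : ∀ B : Matrix (Fin k) (Fin k) ℝ, B.map Complex.ofReal =
        (Complex.ofRealHom.mapMatrix : Matrix (Fin k) (Fin k) ℝ →+* _) B := fun _ => rfl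
    rw [this, map_pow, hAc, this]
  have hG := spectrum.pow_nnnorm_pow_one_div_tendsto_nhds_spectralRadius Ac
  obtain ⟨r, hr1, hr2⟩ := exists_between (show spectralRadius ℂ Ac < 1 from hA)
  have hrtop : r ≠ ⊤ := ne_top_of_lt (lt_of_lt_of_le hr2 le_top)
  set c : ℝ := r.toReal with hc
  have hc1 : c < 1 := by
    have := (ENNReal.toReal_lt_toReal hrtop (by norm_num)).2 hr2
    simpa using this
  have hc0 : 0 ≤ c := ENNReal.toReal_nonneg
  have hev : ∀ᶠ j : ℕ in atTop, ‖A ^ j‖ ≤ c ^ j := by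
    have h1 : ∀ᶠ j : ℕ in atTop, (‖Ac ^ j‖₊ : ℝ≥0∞) ^ (1 / (j:ℝ)) < r :=
      hG.eventually_lt_const hr1
    filter_upwards [h1, eventually_ge_atTop 1] with j hj hj1
    have hj0 : (j : ℝ) ≠ 0 := by positivity
    have h2 : (‖Ac ^ j‖₊ : ℝ≥0∞) ≤ r ^ j := by
      have h3 := ENNReal.rpow_le_rpow hj.le (by positivity : (0:ℝ) ≤ (j:ℝ))
      rwa [← ENNReal.rpow_mul, one_div, inv_mul_cancel₀ hj0, ENNReal.rpow_one,
        ENNReal.rpow_natCast] at h3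
    have h4 : ‖Ac ^ j‖ ≤ c ^ j := by
      have h5 := ENNReal.toReal_mono (by simp [hrtop]) h2
      rwa [ENNReal.toReal_pow, ENNReal.coe_toReal, coe_nnnorm] at h5
    calc ‖A ^ j‖ ≤ ‖(A ^ j).map Complex.ofReal‖ := real_norm_le_complex _
      _ = ‖Ac ^ j‖ := by rw [hmap]
      _ ≤ c ^ j := h4
  have hgeo : Tendsto (fun j : ℕ => c ^ j) atTop (nhds 0) :=
    tendsto_pow_atTop_nhds_zero_of_lt_one hc0 hc1
  exact squeeze_zero' (Eventually.of_forall (fun j => norm_nonneg _)) hev hgeo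

lemma lyap_form_nonneg {k : ℕ} (A D M : Matrix (Fin k) (Fin k) ℝ) (hA : IsSchur A)
    (heq : D = A * D * Aᵀ + M) (hM : ∀ x, 0 ≤ x ⬝ᵥ (M *ᵥ x)) :
    ∀ x, 0 ≤ x ⬝ᵥ (D *ᵥ x) := by
  intro x
  have step : ∀ j : ℕ, ((A ^ j)ᵀ *ᵥ x) ⬝ᵥ (D *ᵥ ((A ^ j)ᵀ *ᵥ x)) ≤ x ⬝ᵥ (D *ᵥ x) := by
    intro j
    induction j with
    | zero => simp
    | succ i ih =>
      refine le_trans ?_ ih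
      set z := (A ^ i)ᵀ *ᵥ x with hz
      have hsucc : (A ^ (i+1))ᵀ *ᵥ x = Aᵀ *ᵥ z := by
        rw [hz, Matrix.mulVec_mulVec, ← Matrix.transpose_mul, ← pow_succ]
      rw [hsucc]
      have hzq : z ⬝ᵥ (D *ᵥ z) = (Aᵀ *ᵥ z) ⬝ᵥ (D *ᵥ (Aᵀ *ᵥ z)) + z ⬝ᵥ (M *ᵥ z) := by
        conv_lhs => rw [heq]
        rw [Matrix.add_mulVec, dotProduct_add]
        congr 1
        rw [← Matrix.mulVec_mulVec, ← Matrix.mulVec_mulVec, Matrix.dotProduct_mulVec,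
          ← Matrix.mulVec_transpose]
      rw [hzq]
      linarith [hM z]
  have hb : ∀ j : ℕ, -(‖D‖ * (‖A ^ j‖ * ‖Ev x‖) ^ 2) ≤ x ⬝ᵥ (D *ᵥ x) := by
    intro j
    refine le_trans ?_ (step j)
    set z := (A ^ j)ᵀ *ᵥ x with hz
    have h1 : (-z) ⬝ᵥ (D *ᵥ z) ≤ ‖D‖ * ‖Ev (-z)‖ * ‖Ev z‖ := dot_mulVec_le D (-z) z
    have hEvneg : ‖Ev (-z)‖ = ‖Ev z‖ := by
      have : Ev (-z) = -(Ev z) := rfl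
      rw [this, norm_neg]
    rw [hEvneg, neg_dotProduct, neg_le] at h1
    refine le_trans (neg_le_neg ?_) h1
    have h2 : ‖Ev z‖ ≤ ‖A ^ j‖ * ‖Ev x‖ := by
      rw [hz]
      calc ‖Ev ((A ^ j)ᵀ *ᵥ x)‖ ≤ ‖(A ^ j)ᵀ‖ * ‖Ev x‖ := norm_mulVec _ x
        _ = ‖A ^ j‖ * ‖Ev x‖ := by rw [norm_transpose]
    calc ‖D‖ * ‖Ev z‖ * ‖Ev z‖ ≤ ‖D‖ * (‖A ^ j‖ * ‖Ev x‖) * (‖A ^ j‖ * ‖Ev x‖) := by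
          have h0 : (0:ℝ) ≤ ‖Ev z‖ := norm_nonneg _
          have h3 : (0:ℝ) ≤ ‖D‖ := norm_nonneg _
          have h4 : ‖Ev z‖ * ‖Ev z‖ ≤ (‖A ^ j‖ * ‖Ev x‖) * (‖A ^ j‖ * ‖Ev x‖) :=
            mul_le_mul h2 h2 h0 (by positivity)
          have h5 := mul_le_mul_of_nonneg_left h4 h3
          linarith [h5]
      _ = ‖D‖ * (‖A ^ j‖ * ‖Ev x‖) ^ 2 := by ring
  have htend : Tendsto (fun j : ℕ => -(‖D‖ * (‖A ^ j‖ * ‖Ev x‖) ^ 2)) atTop (nhds 0) := by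
    have := pow_norm_tendsto A hA
    have h2 : Tendsto (fun j : ℕ => -(‖D‖ * (‖A ^ j‖ * ‖Ev x‖) ^ 2)) atTop
        (nhds (-(‖D‖ * ((0:ℝ) * ‖Ev x‖) ^ 2))) :=
      (((this.mul_const ‖Ev x‖).pow 2).const_mul ‖D‖).neg
    simpa using h2
  exact le_of_tendsto htend (Eventually.of_forall hb)

lemma sandwich_bound {k : ℕ} (P D Qm : Matrix (Fin k) (Fin k) ℝ) (x : Fin k → ℝ) :
    x ⬝ᵥ ((P * D * Qmᵀ) *ᵥ x) ≤ ‖D‖ * ‖P‖ * ‖Qm‖ * ‖Ev x‖ ^ 2 := by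
  have h1 : x ⬝ᵥ ((P * D * Qmᵀ) *ᵥ x) = (Pᵀ *ᵥ x) ⬝ᵥ (D *ᵥ (Qmᵀ *ᵥ x)) := by
    rw [← Matrix.mulVec_mulVec, ← Matrix.mulVec_mulVec, Matrix.dotProduct_mulVec,
      ← Matrix.mulVec_transpose]
  rw [h1]
  have h2 := dot_mulVec_le D (Pᵀ *ᵥ x) (Qmᵀ *ᵥ x)
  have h3 : ‖Ev (Pᵀ *ᵥ x)‖ ≤ ‖P‖ * ‖Ev x‖ := by
    calc ‖Ev (Pᵀ *ᵥ x)‖ ≤ ‖Pᵀ‖ * ‖Ev x‖ := norm_mulVec _ x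
      _ = ‖P‖ * ‖Ev x‖ := by rw [norm_transpose]
  have h4 : ‖Ev (Qmᵀ *ᵥ x)‖ ≤ ‖Qm‖ * ‖Ev x‖ := by
    calc ‖Ev (Qmᵀ *ᵥ x)‖ ≤ ‖Qmᵀ‖ * ‖Ev x‖ := norm_mulVec _ x
      _ = ‖Qm‖ * ‖Ev x‖ := by rw [norm_transpose]
  have hD : (0:ℝ) ≤ ‖D‖ := norm_nonneg _
  have e1 : (0:ℝ) ≤ ‖Ev (Pᵀ *ᵥ x)‖ := norm_nonneg _
  have e2 : (0:ℝ) ≤ ‖Ev (Qmᵀ *ᵥ x)‖ := norm_nonneg _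
  have hP : (0:ℝ) ≤ ‖P‖ := norm_nonneg _
  have hx : (0:ℝ) ≤ ‖Ev x‖ := norm_nonneg _
  calc (Pᵀ *ᵥ x) ⬝ᵥ (D *ᵥ (Qmᵀ *ᵥ x)) ≤ ‖D‖ * ‖Ev (Pᵀ *ᵥ x)‖ * ‖Ev (Qmᵀ *ᵥ x)‖ := h2
    _ ≤ ‖D‖ * (‖P‖ * ‖Ev x‖) * (‖Qm‖ * ‖Ev x‖) := by
        have := mul_le_mul (mul_le_mul_of_nonneg_left h3 hD) h4 e2
          (by positivity)
        linarith [this]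
    _ = ‖D‖ * ‖P‖ * ‖Qm‖ * ‖Ev x‖ ^ 2 := by ring

end S17

open S17 in
open scoped Matrix.Norms.L2Operator in
set_option maxHeartbeats 1000000 in
theorem stmt17 {n m : ℕ} (A : Matrix (Fin n) (Fin n) ℝ) (B : Matrix (Fin n) (Fin m) ℝ)
    (Q : Matrix (Fin n) (Fin n) ℝ) (R : Matrix (Fin m) (Fin m) ℝ)
    (Sig : Matrix (Fin n) (Fin n) ℝ)
    (hQ : Qᵀ = Q) (hR : Rᵀ = R) (hSig : Sig.PosDef)
    (K : Matrix (Fin m) (Fin n) ℝ) (X Y : Matrix (Fin n) (Fin n) ℝ)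
    (hX : Xᵀ = X) (hS : IsSchur (A - B * K))
    (hLyap : (A - B * K)ᵀ * X * (A - B * K) + Q + Kᵀ * R * K = X)
    (hYpd : Y.PosDef) (hY : (A - B * K) * Y * (A - B * K)ᵀ + Sig = Y)
    (N : Matrix (Fin m) (Fin n) ℝ) (hN : N = R * K - Bᵀ * X * (A - B * K))
    (μ1 μ2 η0 β0 : ℝ)
    (hμ1 : μ1 = spec2 Y * spec2 (B * N * Y) ^ 2 / (⨅ i, hSig.1.eigenvalues i))
    (hμ2 : μ2 = spec2 Y * spec2 (B * N * Y) * spec2 (A - B * K) / (⨅ i, hSig.1.eigenvalues i))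
    (hη0 : η0 = (Real.sqrt (μ1 + μ2 ^ 2) - μ2) / (4 * μ1))
    (hβ0 : β0 = 1 / (1 - 4 * μ1 * η0 ^ 2 - 4 * μ2 * η0))
    (hSchur : ∀ η : ℝ, 0 ≤ η → η ≤ η0 → IsSchur (A - B * (K - (2 * η) • (N * Y)))) :
    0 < β0 ∧
    ∀ η : ℝ, 0 ≤ η → η ≤ η0 →
      ∀ Yη : Matrix (Fin n) (Fin n) ℝ, Yηᵀ = Yη →
        (A - B * (K - (2 * η) • (N * Y))) * Yη * (A - B * (K - (2 * η) • (N * Y)))ᵀ + Sig = Yη →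
        spec2 Yη ≤ β0 * spec2 Y := by
  simp only [spec2_eq_norm] at hμ1 hμ2 ⊢
  rcases Nat.eq_zero_or_pos n with hn | hn
  · -- degenerate case n = 0
    subst hn
    haveI : IsEmpty (Fin 0) := by infer_instance
    have hY0 : Y = 0 := Subsingleton.elim _ _
    have hμ10 : μ1 = 0 := by rw [hμ1, hY0]; simp
    have hμ20 : μ2 = 0 := by rw [hμ2, hY0]; simp
    have hη00 : η0 = 0 := by rw [hη0, hμ10, hμ20]; norm_num
    have hβ01 : β0 = 1 := by rw [hβ0, hμ10, hμ20]; norm_num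
    refine ⟨by rw [hβ01]; norm_num, ?_⟩
    intro η _ _ Yη _ _
    have hYη0 : Yη = 0 := Subsingleton.elim _ _
    rw [hYη0, hY0, hβ01]
    simp
  -- main case n ≥ 1
  haveI : Nonempty (Fin n) := ⟨⟨0, hn⟩⟩
  set lam : ℝ := ⨅ i, hSig.1.eigenvalues i with hlam
  set AK : Matrix (Fin n) (Fin n) ℝ := A - B * K with hAKdef
  set G : Matrix (Fin n) (Fin n) ℝ := B * N * Y with hGdef
  have hlampos : 0 < lam := by
    obtain ⟨i0⟩ := (inferInstance : Nonempty (Fin n))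
    have h1 : ∀ j, hSig.1.eigenvalues j > 0 := fun j => hSig.eigenvalues_pos j
    obtain ⟨i1, hi1⟩ := Finite.exists_min (fun i => hSig.1.eigenvalues i)
    have : hSig.1.eigenvalues i1 ≤ lam := le_ciInf hi1
    exact lt_of_lt_of_le (h1 i1) this
  have hypos : 0 < ‖Y‖ := by
    rw [norm_pos_iff]
    intro hY0
    obtain ⟨i0⟩ := (inferInstance : Nonempty (Fin n))
    have h2 := hYpd.dotProduct_mulVec_pos (x := Pi.single i0 1) (by
      intro hcon
      have := congrFun hcon i0
      simp [Pi.single_eq_same] at this)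
    rw [hY0] at h2
    simp at h2
  have hμ1n : 0 ≤ μ1 := by rw [hμ1]; exact div_nonneg (by positivity) hlampos.le
  have hμ2n : 0 ≤ μ2 := by rw [hμ2]; exact div_nonneg (by positivity) hlampos.le
  have hη0n : 0 ≤ η0 := by
    rcases eq_or_lt_of_le hμ1n with h | h
    · rw [hη0, ← h]; norm_num
    · rw [hη0]
      have hs : μ2 ≤ Real.sqrt (μ1 + μ2 ^ 2) := by
        have h2 := Real.sqrt_le_sqrt (show μ2 ^ 2 ≤ μ1 + μ2 ^ 2 by nlinarith)
        rwa [Real.sqrt_sq hμ2n] at h2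
      exact div_nonneg (by linarith) (by positivity)
  have hc01 : 4 * μ1 * η0 ^ 2 + 4 * μ2 * η0 < 1 := by
    rcases eq_or_lt_of_le hμ1n with h | h
    · -- μ1 = 0 forces ‖G‖ = 0, hence μ2 = 0 and η0 = 0
      have hg0 : ‖G‖ = 0 := by
        by_contra hg
        have hgpos : 0 < ‖G‖ := lt_of_le_of_ne (norm_nonneg _) (Ne.symm hg)
        have : 0 < μ1 := by rw [hμ1]; positivity
        linarith [h.symm ▸ this]
      have hμ20 : μ2 = 0 := by rw [hμ2, hg0]; simp
      have hη00 : η0 = 0 := by rw [hη0, ← h, hμ20]; norm_num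
      rw [← h, hμ20, hη00]; norm_num
    · set s : ℝ := Real.sqrt (μ1 + μ2 ^ 2) with hsdef
      have hs2 : s ^ 2 = μ1 + μ2 ^ 2 := Real.sq_sqrt (by positivity)
      have hs0 : 0 ≤ s := Real.sqrt_nonneg _
      have hsge : μ2 ≤ s := by nlinarith
      have hη0v : η0 = (s - μ2) / (4 * μ1) := hη0
      have hd2 : (s - μ2) ^ 2 + 4 * μ2 * (s - μ2) < 4 * μ1 := by
        nlinarith [sq_nonneg (s - μ2), hs2, h, hμ2n]
      have hval : 4 * μ1 * η0 ^ 2 + 4 * μ2 * η0 =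
          ((s - μ2) ^ 2 + 4 * μ2 * (s - μ2)) / (4 * μ1) := by
        rw [hη0v]
        field_simp
      rw [hval, div_lt_one (by positivity)]
      exact hd2
  have h1mc0 : 0 < 1 - 4 * μ1 * η0 ^ 2 - 4 * μ2 * η0 := by linarith
  have hβ0pos : 0 < β0 := by rw [hβ0]; exact one_div_pos.mpr h1mc0
  refine ⟨hβ0pos, ?_⟩
  intro η hη1 hη2 Yη hYηs hEq
  -- rewrite the closed-loop matrix
  have hAηeq : A - B * (K - (2 * η) • (N * Y)) = AK + (2 * η) • G := by
    rw [hAKdef, hGdef, Matrix.mul_sub, Matrix.mul_smul, ← Matrix.mul_assoc]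
    abel
  rw [hAηeq] at hEq
  have hSch : IsSchur (AK + (2 * η) • G) := by rw [← hAηeq]; exact hSchur η hη1 hη2
  -- Yη is positive semidefinite (as a quadratic form)
  have hSigpos : ∀ x : Fin n → ℝ, 0 ≤ x ⬝ᵥ (Sig *ᵥ x) := by
    intro x
    have := hSig.posSemidef.dotProduct_mulVec_nonneg x
    simpa using this
  have hYηpos : ∀ x, 0 ≤ x ⬝ᵥ (Yη *ᵥ x) :=
    lyap_form_nonneg (AK + (2 * η) • G) Yη Sig hSch hEq.symm hSigpos
  -- constants
  set c : ℝ := 4 * μ1 * η ^ 2 + 4 * μ2 * η with hcdef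
  have hcn : 0 ≤ c := by
    rw [hcdef]
    exact add_nonneg (mul_nonneg (mul_nonneg (by norm_num) hμ1n) (sq_nonneg η))
      (mul_nonneg (mul_nonneg (by norm_num) hμ2n) hη1)
  have hcle : c ≤ 4 * μ1 * η0 ^ 2 + 4 * μ2 * η0 := by
    rw [hcdef]
    exact add_le_add
      (mul_le_mul_of_nonneg_left (pow_le_pow_left₀ hη1 hη2 2)
        (mul_nonneg (by norm_num) hμ1n))
      (mul_le_mul_of_nonneg_left hη2 (mul_nonneg (by norm_num) hμ2n))
  set t : ℝ := c * ‖Yη‖ / ‖Y‖ with htdef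
  have htn : 0 ≤ t := div_nonneg (mul_nonneg hcn (norm_nonneg _)) (norm_nonneg _)
  -- expansion of the perturbed Lyapunov operator
  set Pm : Matrix (Fin n) (Fin n) ℝ :=
    (2 * η) • (AK * Yη * Gᵀ) + (2 * η) • (G * Yη * AKᵀ) + ((2 * η) * (2 * η)) • (G * Yη * Gᵀ)
    with hPmdef
  have hexp : (AK + (2 * η) • G) * Yη * (AK + (2 * η) • G)ᵀ = AK * Yη * AKᵀ + Pm := by
    rw [hPmdef]
    simp only [Matrix.transpose_add, Matrix.transpose_smul, Matrix.add_mul, Matrix.mul_add,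
      Matrix.smul_mul, Matrix.mul_smul, smul_smul]
    module
  have hYηeq : Yη = AK * Yη * AKᵀ + Pm + Sig := by
    conv_lhs => rw [← hEq]
    rw [hexp]
  -- Lyapunov equation for W := t•Y - (Yη - Y)
  set W : Matrix (Fin n) (Fin n) ℝ := t • Y - (Yη - Y) with hWdef
  have hWeq : W = AK * W * AKᵀ + (t • Sig - Pm) := by
    have h2 : AK * Y * AKᵀ = Y - Sig := eq_sub_of_add_eq hY
    have h3 : AK * Yη * AKᵀ = Yη - Pm - Sig := by
      conv_rhs => rw [hYηeq]
      abel
    rw [hWdef]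
    simp only [Matrix.sub_mul, Matrix.mul_sub, Matrix.smul_mul, Matrix.mul_smul]
    rw [h2, h3]
    module
  -- the quadratic form of t•Sig - Pm is nonnegative
  have hPm_bound : ∀ x, x ⬝ᵥ (Pm *ᵥ x) ≤
      (4 * η * (‖AK‖ * ‖G‖) + 4 * η ^ 2 * ‖G‖ ^ 2) * ‖Yη‖ * ‖Ev x‖ ^ 2 := by
    intro x
    have e1 := sandwich_bound AK Yη G x
    have e2 := sandwich_bound G Yη AK x
    have e3 := sandwich_bound G Yη G x
    have hq : x ⬝ᵥ (Pm *ᵥ x) = (2 * η) * (x ⬝ᵥ ((AK * Yη * Gᵀ) *ᵥ x))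
        + (2 * η) * (x ⬝ᵥ ((G * Yη * AKᵀ) *ᵥ x))
        + ((2 * η) * (2 * η)) * (x ⬝ᵥ ((G * Yη * Gᵀ) *ᵥ x)) := by
      rw [hPmdef]
      simp only [Matrix.add_mulVec, Matrix.smul_mulVec, dotProduct_add,
        dotProduct_smul, smul_eq_mul]
    rw [hq]
    have hη2n : (0:ℝ) ≤ 2 * η := by linarith
    nlinarith [mul_le_mul_of_nonneg_left e1 hη2n, mul_le_mul_of_nonneg_left e2 hη2n,
      mul_le_mul_of_nonneg_left e3 (mul_nonneg hη2n hη2n)]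
  have hkey : t * lam = (4 * η * (‖AK‖ * ‖G‖) + 4 * η ^ 2 * ‖G‖ ^ 2) * ‖Yη‖ := by
    rw [htdef, hcdef, hμ1, hμ2]
    field_simp
    ring
  have hMW : ∀ x, 0 ≤ x ⬝ᵥ ((t • Sig - Pm) *ᵥ x) := by
    intro x
    have hq : x ⬝ᵥ ((t • Sig - Pm) *ᵥ x) = t * (x ⬝ᵥ (Sig *ᵥ x)) - x ⬝ᵥ (Pm *ᵥ x) := by
      rw [Matrix.sub_mulVec, Matrix.smul_mulVec]
      simp only [dotProduct_sub, dotProduct_smul, smul_eq_mul]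
    rw [hq]
    have hSx : lam * ‖Ev x‖ ^ 2 ≤ x ⬝ᵥ (Sig *ᵥ x) := by
      rw [norm_Ev_sq]
      exact lam_min_bound Sig hSig x
    have h5 : t * (lam * ‖Ev x‖ ^ 2) ≤ t * (x ⬝ᵥ (Sig *ᵥ x)) :=
      mul_le_mul_of_nonneg_left hSx htn
    have h6 := hPm_bound x
    have h7 : t * (lam * ‖Ev x‖ ^ 2) =
        (4 * η * (‖AK‖ * ‖G‖) + 4 * η ^ 2 * ‖G‖ ^ 2) * ‖Yη‖ * ‖Ev x‖ ^ 2 := by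
      rw [← mul_assoc, hkey]
    linarith
  -- positivity of W's quadratic form
  have hWpos : ∀ x, 0 ≤ x ⬝ᵥ (W *ᵥ x) :=
    lyap_form_nonneg AK W (t • Sig - Pm) hS hWeq hMW
  -- deduce the norm bound on Yη
  have hform : ∀ x, x ⬝ᵥ (Yη *ᵥ x) ≤ ((1 + t) * ‖Y‖) * ‖Ev x‖ ^ 2 := by
    intro x
    have h1 := hWpos x
    have h2 : x ⬝ᵥ (W *ᵥ x) = t * (x ⬝ᵥ (Y *ᵥ x)) + x ⬝ᵥ (Y *ᵥ x) - x ⬝ᵥ (Yη *ᵥ x) := by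
      rw [hWdef, Matrix.sub_mulVec, Matrix.sub_mulVec, Matrix.smul_mulVec]
      simp only [dotProduct_sub, dotProduct_smul, smul_eq_mul]
      ring
    rw [h2] at h1
    have h3 : x ⬝ᵥ (Y *ᵥ x) ≤ ‖Y‖ * ‖Ev x‖ ^ 2 := by
      have := dot_mulVec_le Y x x
      nlinarith [this]
    have h4 : (1 + t) * (x ⬝ᵥ (Y *ᵥ x)) ≤ (1 + t) * (‖Y‖ * ‖Ev x‖ ^ 2) :=
      mul_le_mul_of_nonneg_left h3 (by linarith)
    nlinarith [h4]
  have hu : ‖Yη‖ ≤ (1 + t) * ‖Y‖ :=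
    norm_le_of_form Yη hYηs hYηpos (mul_nonneg (by linarith) (norm_nonneg _)) hform
  have h1 : ‖Yη‖ ≤ ‖Y‖ + c * ‖Yη‖ := by
    have : (1 + t) * ‖Y‖ = ‖Y‖ + c * ‖Yη‖ := by
      rw [htdef]
      field_simp
    linarith [this ▸ hu]
  have h2 : ‖Yη‖ ≤ ‖Y‖ + (4 * μ1 * η0 ^ 2 + 4 * μ2 * η0) * ‖Yη‖ := by
    have := mul_le_mul_of_nonneg_right hcle (norm_nonneg Yη)
    linarith
  rw [hβ0]
  rw [div_mul_eq_mul_div, one_mul, le_div_iff₀ h1mc0]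
  nlinarith [h2]
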